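/- arXiv:2307.13559 — 11 statements merged into one kernel-verified Lean document; each statement's English description precedes it below -/
import Mathlib

section
/- Let S be a commutative noetherian local ring with maximal ideal n, let ω ∈ n be a non-zerodivisor, and let f : P → Q be an injective S-linear map between finitely generated projective S-modules such that ω annihilates Q/f(P) (equivalently, ω·q ∈ f(P) for every q ∈ Q). Then there exists a unique S-linear map f_Σ : Q → P such that f ∘ f_Σ = ω·id_Q and f_Σ ∘ f = ω·id_P. Moreover, f_Σ is injective and ω annihilates P/f_Σ(Q) (equivalently, ω·p ∈ f_Σ(Q) for every p ∈ P). -/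
universe u

/-- A regular element of `S` acts regularly on any projective `S`-module. -/
lemma smul_reg_of_projective {S M : Type*} [CommRing S] [AddCommGroup M] [Module S M]
    [Module.Projective S M] {ω : S} (hreg : ω ∈ nonZeroDivisors S) {m : M}
    (h : ω • m = 0) : m = 0 := by
  obtain ⟨s, hs⟩ := Module.Projective.out (R := S) (P := M)
  have hsm : s m = 0 := by
    have h1 : ω • s m = 0 := by rw [← map_smul, h, map_zero]
    ext a
    have := congrArg (fun v => v a) h1
    simp only [Finsupp.smul_apply, smul_eq_mul, Finsupp.coe_zero, Pi.zero_apply] at this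
    exact hreg.2 _ (by rwa [mul_comm] at this)
  have := hs m
  rw [hsm, map_zero] at this
  exact this.symm

/-- existence and uniqueness of `f_Σ` with `f ∘ f_Σ = ω·id` and
`f_Σ ∘ f = ω·id`; moreover `f_Σ` is injective and `ω` annihilates `P / f_Σ(Q)`. -/
theorem stmt_0 {S : Type u} [CommRing S] [IsNoetherianRing S] [IsLocalRing S]
    (ω : S) (hω : ω ∈ IsLocalRing.maximalIdeal S) (hreg : ω ∈ nonZeroDivisors S)
    {P Q : Type u} [AddCommGroup P] [Module S P] [AddCommGroup Q] [Module S Q]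
    [Module.Finite S P] [Module.Projective S P]
    [Module.Finite S Q] [Module.Projective S Q]
    (f : P →ₗ[S] Q) (hinj : Function.Injective f)
    (hcok : ∀ q : Q, ω • q ∈ LinearMap.range f) :
    (∃! fSig : Q →ₗ[S] P, (∀ q : Q, f (fSig q) = ω • q) ∧ (∀ p : P, fSig (f p) = ω • p)) ∧
    (∀ fSig : Q →ₗ[S] P, (∀ q : Q, f (fSig q) = ω • q) → (∀ p : P, fSig (f p) = ω • p) →
      Function.Injective fSig ∧ ∀ p : P, ω • p ∈ LinearMap.range fSig) := by
  have g : ∀ q : Q, ∃ p : P, f p = ω • q := fun q => by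
    obtain ⟨p, hp⟩ := hcok q; exact ⟨p, hp⟩
  choose gf hgf using g
  let fSig : Q →ₗ[S] P :=
    { toFun := gf
      map_add' := fun a b => hinj (by rw [hgf, map_add, hgf, hgf, smul_add])
      map_smul' := fun c a => hinj (by
        rw [hgf, RingHom.id_apply, map_smul, hgf, smul_comm]) }
  have h1 : ∀ q : Q, f (fSig q) = ω • q := hgf
  have h2 : ∀ p : P, fSig (f p) = ω • p := fun p =>
    hinj (by rw [h1, map_smul])
  constructor
  · exact ⟨fSig, ⟨h1, h2⟩, fun g' hg' => LinearMap.ext fun q => hinj (by rw [hg'.1, h1])⟩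
  · intro fS hS1 hS2
    constructor
    · intro a b hab
      have : ω • a = ω • b := by rw [← hS1, ← hS1, hab]
      have : ω • (a - b) = 0 := by rw [smul_sub, this, sub_self]
      have := smul_reg_of_projective hreg this
      exact sub_eq_zero.mp this
    · intro p
      exact ⟨f p, hS2 p⟩
end

section
/- Let S be a commutative noetherian local ring with maximal ideal n and ω ∈ n a non-zerodivisor. Let f : P → Q and f' : P' → Q' be injective S-linear maps between finitely generated projective S-modules whose cokernels are annihilated by ω, with associated maps f_Σ and f'_Σ, and let (ψ₁,ψ₀) be a morphism from (P →f Q) to (P' →f' Q') (so ψ₀ ∘ f = f' ∘ ψ₁). Then (ψ₁,ψ₀) is null-homotopic if and only if (ψ₀,ψ₁), regarded as a morphism from (Q →f_Σ P) to (Q' →f'_Σ P'), is null-homotopic. That is, there exist S-linear maps s₁ : P → Q' and s₀ : Q → P' with ψ₀ ∘ f − f' ∘ s₀ ∘ f = ω·s₁ if and only if there exist S-linear maps t₁ : Q → P' and t₀ : P → Q' with ψ₁ ∘ f_Σ − f'_Σ ∘ t₀ ∘ f_Σ = ω·t₁. -/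
universe u

/-- `(ψ₁, ψ₀)` is null-homotopic iff `(ψ₀, ψ₁) : f_Σ → f'_Σ` is null-homotopic. -/

lemma smul_inj_of_projective {S M : Type u} [CommRing S] [AddCommGroup M] [Module S M]
    [Module.Projective S M] {ω : S} (hreg : ω ∈ nonZeroDivisors S) {x : M}
    (h : ω • x = 0) : x = 0 := by
  obtain ⟨s, hs⟩ := Module.projective_def'.mp (inferInstance : Module.Projective S M)
  have hsx : s x = 0 := by
    have h0 : ω • s x = 0 := by rw [← map_smul, h, map_zero]
    ext a
    have := congrArg (fun g => g a) h0
    simp only [Finsupp.coe_smul, Pi.smul_apply, smul_eq_mul, Finsupp.coe_zero, Pi.zero_apply] at this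
    rw [mul_comm] at this; exact hreg.2 _ this
  have := congrArg (fun g => g x) hs
  simp only [LinearMap.coe_comp, Function.comp_apply, LinearMap.id_coe, id_eq] at this
  rw [← this, hsx, map_zero]

lemma nh_flip {S A B A' B' : Type u} [CommRing S]
    [AddCommGroup A] [Module S A] [AddCommGroup B] [Module S B]
    [AddCommGroup A'] [Module S A'] [AddCommGroup B'] [Module S B'] (ω : S)
    (f : A →ₗ[S] B) (fS : B →ₗ[S] A) (f' : A' →ₗ[S] B') (fS' : B' →ₗ[S] A')
    (hinj' : Function.Injective f')
    (h1 : ∀ b : B, f (fS b) = ω • b)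
    (h1' : ∀ b : B', f' (fS' b) = ω • b) (h2' : ∀ a : A', fS' (f' a) = ω • a)
    (hregB' : ∀ x : B', ω • x = 0 → x = 0)
    (ψ₁ : A →ₗ[S] A') (ψ₀ : B →ₗ[S] B') (hcomm : ∀ a : A, ψ₀ (f a) = f' (ψ₁ a))
    (s₁ : A →ₗ[S] B') (s₀ : B →ₗ[S] A')
    (hs : ∀ a : A, ψ₀ (f a) - f' (s₀ (f a)) = ω • s₁ a) :
    ∀ q : B, ψ₁ (fS q) - fS' (s₁ (fS q)) = ω • s₀ q := by
  intro q
  have star : s₁ (fS q) = ψ₀ q - f' (s₀ q) := by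
    have h := hs (fS q)
    rw [h1 q, map_smul, map_smul, map_smul] at h
    have : ω • ((ψ₀ q - f' (s₀ q)) - s₁ (fS q)) = 0 := by
      rw [smul_sub, smul_sub, ← h]; abel
    have := hregB' _ this
    rw [sub_eq_zero] at this
    exact this.symm
  have comm2 : ψ₁ (fS q) = fS' (ψ₀ q) := by
    apply hinj'
    rw [← hcomm, h1 q, map_smul, h1']
  rw [star, comm2, map_sub, h2', sub_sub_cancel]

theorem stmt_3 {S : Type u} [CommRing S] [IsNoetherianRing S] [IsLocalRing S]
    (ω : S) (hω : ω ∈ IsLocalRing.maximalIdeal S) (hreg : ω ∈ nonZeroDivisors S)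
    {P Q P' Q' : Type u} [AddCommGroup P] [Module S P] [AddCommGroup Q] [Module S Q]
    [AddCommGroup P'] [Module S P'] [AddCommGroup Q'] [Module S Q']
    [Module.Finite S P] [Module.Projective S P]
    [Module.Finite S Q] [Module.Projective S Q]
    [Module.Finite S P'] [Module.Projective S P']
    [Module.Finite S Q'] [Module.Projective S Q']
    (f : P →ₗ[S] Q) (hinj : Function.Injective f)
    (hcok : ∀ q : Q, ω • q ∈ LinearMap.range f)
    (f' : P' →ₗ[S] Q') (hinj' : Function.Injective f')
    (hcok' : ∀ q : Q', ω • q ∈ LinearMap.range f')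
    (fSig : Q →ₗ[S] P)
    (h1 : ∀ q : Q, f (fSig q) = ω • q) (h2 : ∀ p : P, fSig (f p) = ω • p)
    (fSig' : Q' →ₗ[S] P')
    (h1' : ∀ q : Q', f' (fSig' q) = ω • q) (h2' : ∀ p : P', fSig' (f' p) = ω • p)
    (ψ₁ : P →ₗ[S] P') (ψ₀ : Q →ₗ[S] Q')
    (hcomm : ∀ p : P, ψ₀ (f p) = f' (ψ₁ p)) :
    (∃ (s₁ : P →ₗ[S] Q') (s₀ : Q →ₗ[S] P'),
        ∀ p : P, ψ₀ (f p) - f' (s₀ (f p)) = ω • s₁ p) ↔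
    (∃ (t₁ : Q →ₗ[S] P') (t₀ : P →ₗ[S] Q'),
        ∀ q : Q, ψ₁ (fSig q) - fSig' (t₀ (fSig q)) = ω • t₁ q) := by
  have regQ' : ∀ x : Q', ω • x = 0 → x = 0 := fun x h => smul_inj_of_projective hreg h
  have regP' : ∀ x : P', ω • x = 0 → x = 0 := fun x h => smul_inj_of_projective hreg h
  have hinjSig' : Function.Injective fSig' := by
    intro x y hxy
    have : ω • (x - y) = 0 := by
      rw [smul_sub, ← h1', ← h1', hxy, sub_self]
    have := regQ' _ this
    rwa [sub_eq_zero] at this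
  have hcomm2 : ∀ q : Q, ψ₁ (fSig q) = fSig' (ψ₀ q) := by
    intro q
    apply hinj'
    rw [← hcomm, h1 q, map_smul, h1']
  constructor
  · rintro ⟨s₁, s₀, hs⟩
    exact ⟨s₀, s₁, nh_flip ω f fSig f' fSig' hinj' h1 h1' h2' regQ' ψ₁ ψ₀ hcomm s₁ s₀ hs⟩
  · rintro ⟨t₁, t₀, ht⟩
    exact ⟨t₀, t₁, nh_flip ω fSig f fSig' f' hinjSig' h2 h2' h1' regP' ψ₀ ψ₁ hcomm2 t₁ t₀ ht⟩
end

section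
/- Let S be a commutative noetherian local ring with maximal ideal n and ω ∈ n a non-zerodivisor. Let f : P → Q and f' : P' → Q' be injective S-linear maps between finitely generated projective S-modules whose cokernels are annihilated by ω, with associated maps f_Σ, f'_Σ, and let (ψ₁,ψ₀) be a morphism from (P →f Q) to (P' →f' Q'). Define c : P' × Q → Q' × P by c(p',q) = (f'(p') + ψ₀(q), −f_Σ(q)) and c' : Q' × P → P' × Q by c'(q',p) = (f'_Σ(q') + ψ₁(p), −f(p)). Then c ∘ c' = ω·id_{Q'×P} and c' ∘ c = ω·id_{P'×Q}; in particular c' is the map c_Σ associated to the mapping cone c. -/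
universe u

/-- the map `c'(q', p) = (f'_Σ(q') + ψ₁(p), -f(p))` satisfies
`c ∘ c' = ω·id` and `c' ∘ c = ω·id`, i.e. `c' = c_Σ`. -/
theorem stmt_5 {S : Type u} [CommRing S] [IsNoetherianRing S] [IsLocalRing S]
    (ω : S) (hω : ω ∈ IsLocalRing.maximalIdeal S) (hreg : ω ∈ nonZeroDivisors S)
    {P Q P' Q' : Type u} [AddCommGroup P] [Module S P] [AddCommGroup Q] [Module S Q]
    [AddCommGroup P'] [Module S P'] [AddCommGroup Q'] [Module S Q']
    [Module.Finite S P] [Module.Projective S P]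
    [Module.Finite S Q] [Module.Projective S Q]
    [Module.Finite S P'] [Module.Projective S P']
    [Module.Finite S Q'] [Module.Projective S Q']
    (f : P →ₗ[S] Q) (hinj : Function.Injective f)
    (hcok : ∀ q : Q, ω • q ∈ LinearMap.range f)
    (f' : P' →ₗ[S] Q') (hinj' : Function.Injective f')
    (hcok' : ∀ q : Q', ω • q ∈ LinearMap.range f')
    (fSig : Q →ₗ[S] P)
    (h1 : ∀ q : Q, f (fSig q) = ω • q) (h2 : ∀ p : P, fSig (f p) = ω • p)
    (fSig' : Q' →ₗ[S] P')
    (h1' : ∀ q : Q', f' (fSig' q) = ω • q) (h2' : ∀ p : P', fSig' (f' p) = ω • p)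
    (ψ₁ : P →ₗ[S] P') (ψ₀ : Q →ₗ[S] Q')
    (hcomm : ∀ p : P, ψ₀ (f p) = f' (ψ₁ p))
    (c : P' × Q →ₗ[S] Q' × P)
    (hc : ∀ (p' : P') (q : Q), c (p', q) = (f' p' + ψ₀ q, -fSig q))
    (c' : Q' × P →ₗ[S] P' × Q)
    (hc' : ∀ (q' : Q') (p : P), c' (q', p) = (fSig' q' + ψ₁ p, -f p)) :
    (∀ x : Q' × P, c (c' x) = ω • x) ∧ (∀ y : P' × Q, c' (c y) = ω • y) := by
  have key : ∀ q : Q, fSig' (ψ₀ q) = ψ₁ (fSig q) := by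
    intro q
    apply hinj'
    rw [h1', ← map_smul, ← h1 q, hcomm]
  constructor
  · rintro ⟨q', p⟩
    rw [hc', hc, Prod.smul_mk, Prod.mk.injEq]
    constructor
    · simp [map_add, h1', ← hcomm, map_neg]
    · simp [map_neg, h2]
  · rintro ⟨p', q⟩
    rw [hc, hc', Prod.smul_mk, Prod.mk.injEq]
    constructor
    · simp [map_add, h2', key, map_neg]
    · simp [map_neg, h1]
end

section
/- Let S be a commutative noetherian local ring with maximal ideal n and ω ∈ n a non-zerodivisor. Let f : P → Q be an injective S-linear map between finitely generated projective S-modules whose cokernel is annihilated by ω, and let f_Σ : Q → P be the unique map with f ∘ f_Σ = ω·id_Q and f_Σ ∘ f = ω·id_P. Define l : Q × P → P × Q by l(q,p) = (−f_Σ(q) + p, f(p)). Then l is injective and the quotient S-module (P × Q)/l(Q × P) is isomorphic to Q/ωQ. -/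
universe u

/-- the map `l(q, p) = (-f_Σ(q) + p, f(p))` is injective with cokernel
isomorphic to `Q/ωQ`. -/
theorem stmt_7 {S : Type u} [CommRing S] [IsNoetherianRing S] [IsLocalRing S]
    (ω : S) (hω : ω ∈ IsLocalRing.maximalIdeal S) (hreg : ω ∈ nonZeroDivisors S)
    {P Q : Type u} [AddCommGroup P] [Module S P] [AddCommGroup Q] [Module S Q]
    [Module.Finite S P] [Module.Projective S P]
    [Module.Finite S Q] [Module.Projective S Q]
    (f : P →ₗ[S] Q) (hinj : Function.Injective f)
    (hcok : ∀ q : Q, ω • q ∈ LinearMap.range f)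
    (fSig : Q →ₗ[S] P)
    (h1 : ∀ q : Q, f (fSig q) = ω • q) (h2 : ∀ p : P, fSig (f p) = ω • p)
    (l : Q × P →ₗ[S] P × Q)
    (hl : ∀ (q : Q) (p : P), l (q, p) = (-fSig q + p, f p)) :
    Function.Injective l ∧
      Nonempty (((P × Q) ⧸ LinearMap.range l) ≃ₗ[S]
        (Q ⧸ LinearMap.range (ω • (LinearMap.id : Q →ₗ[S] Q)))) := by
  -- ω-torsion-freeness of Q
  have injω : ∀ q : Q, ω • q = 0 → q = 0 := by
    obtain ⟨s, hs⟩ := Module.projective_def'.mp ‹Module.Projective S Q›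
    intro q hq
    have hsq : ω • s q = 0 := by rw [← map_smul, hq, map_zero]
    have hsq0 : s q = 0 := by
      ext a
      have := congrArg (fun v => v a) hsq
      simp only [Finsupp.smul_apply, smul_eq_mul, Finsupp.coe_zero, Pi.zero_apply] at this
      exact (mem_nonZeroDivisors_iff.mp hreg).2 _ (by rwa [mul_comm] at this)
    have := congrArg (Finsupp.linearCombination S _root_.id) hsq0
    rw [map_zero] at this
    have h := congrFun (congrArg (fun g => g.toFun) hs) q
    simpa [this] using h.symm
  constructor
  · -- injectivity
    rw [← LinearMap.ker_eq_bot]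
    ext ⟨q, p⟩
    simp only [LinearMap.mem_ker, Submodule.mem_bot, hl, Prod.mk_eq_zero, Prod.ext_iff]
    constructor
    · rintro ⟨ha, hb⟩
      have hp : p = 0 := hinj (by simpa using hb)
      subst hp
      have hq : fSig q = 0 := by simpa using ha
      have : ω • q = 0 := by rw [← h1 q, hq, map_zero]
      exact ⟨injω q this, rfl⟩
    · rintro ⟨hq, hp⟩; subst hq; subst hp; simp
  · -- cokernel
    set ωQ : Submodule S Q := LinearMap.range (ω • (LinearMap.id : Q →ₗ[S] Q)) with hωQ
    have memωQ : ∀ x : Q, x ∈ ωQ ↔ ∃ q : Q, ω • q = x := by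
      intro x
      simp [hωQ, LinearMap.mem_range]
    set ψ : (P × Q) →ₗ[S] Q := LinearMap.snd S P Q - f.comp (LinearMap.fst S P Q) with hψ
    have hψapp : ∀ (p : P) (q : Q), ψ (p, q) = q - f p := by intro p q; simp [hψ]
    set g : (P × Q) →ₗ[S] Q ⧸ ωQ := ωQ.mkQ.comp ψ with hg
    have hker : LinearMap.ker g = LinearMap.range l := by
      ext ⟨p', q'⟩
      constructor
      · intro hx
        have : ψ (p', q') ∈ ωQ := by
          simpa [hg, Submodule.Quotient.mk_eq_zero] using hx
        rw [hψapp] at this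
        obtain ⟨q₀, hq₀⟩ := (memωQ _).mp this
        refine ⟨(q₀, p' + fSig q₀), ?_⟩
        rw [hl]
        ext
        · simp
        · simp only
          rw [map_add, h1, hq₀]
          abel
      · rintro ⟨⟨q, p⟩, heq⟩
        rw [← heq, hl]
        have : ψ (-fSig q + p, f p) = ω • q := by
          rw [hψapp, map_add, map_neg, h1]
          abel
        simp only [LinearMap.mem_ker, hg, LinearMap.comp_apply, this,
          Submodule.mkQ_apply, Submodule.Quotient.mk_eq_zero]
        exact (memωQ _).mpr ⟨q, rfl⟩
    have hsurj : Function.Surjective g := by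
      intro x
      obtain ⟨q, rfl⟩ := Submodule.mkQ_surjective ωQ x
      exact ⟨(0, q), by simp [hg, hψapp]⟩
    exact ⟨(Submodule.quotEquivOfEq _ _ hker.symm).trans
      (g.quotKerEquivOfSurjective hsurj)⟩
end

section
/- Let S be a commutative noetherian local ring with maximal ideal n and ω ∈ n a non-zerodivisor. Let f : P → Q be an injective S-linear map between finitely generated projective S-modules whose cokernel is annihilated by ω, with f_Σ : Q → P the unique map satisfying f ∘ f_Σ = ω·id_Q and f_Σ ∘ f = ω·id_P. Let f̄ : P/ωP → Q/ωQ and f̄_Σ : Q/ωQ → P/ωP be the maps induced by f and f_Σ on the quotients. Then ker(f̄) = image(f̄_Σ) and ker(f̄_Σ) = image(f̄); that is, the 2-periodic complex ⋯ → P/ωP →f̄ Q/ωQ →f̄_Σ P/ωP →f̄ Q/ωQ → ⋯ of S/(ω)-modules is exact. -/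
universe u

/-- A projective module over a ring has no `ω`-torsion when `ω` is a nonzerodivisor. -/
lemma proj_smul_reg {S : Type u} [CommRing S] {M : Type u} [AddCommGroup M] [Module S M]
    [Module.Projective S M] {ω : S} (hreg : ω ∈ nonZeroDivisors S) :
    ∀ m : M, ω • m = 0 → m = 0 := by
  obtain ⟨s, hs⟩ := (Module.projective_def' (R := S) (P := M)).mp ‹_›
  intro m hm
  have h1 : ω • s m = 0 := by rw [← map_smul, hm, map_zero]
  have h2 : s m = 0 := by
    ext i
    refine hreg.2 _ ?_
    have := Finsupp.ext_iff.mp h1 i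
    simpa [smul_eq_mul, mul_comm] using this
  have := congrFun (congrArg DFunLike.coe hs) m
  simp only [LinearMap.coe_comp, Function.comp_apply, LinearMap.id_apply] at this
  rw [← this, h2, map_zero]

/-- the induced 2-periodic complex
`⋯ → P/ωP →f̄ Q/ωQ →f̄_Σ P/ωP → ⋯` is exact: `ker f̄ = im f̄_Σ` and `ker f̄_Σ = im f̄`. -/
theorem stmt_8 {S : Type u} [CommRing S] [IsNoetherianRing S] [IsLocalRing S]
    (ω : S) (hω : ω ∈ IsLocalRing.maximalIdeal S) (hreg : ω ∈ nonZeroDivisors S)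
    {P Q : Type u} [AddCommGroup P] [Module S P] [AddCommGroup Q] [Module S Q]
    [Module.Finite S P] [Module.Projective S P]
    [Module.Finite S Q] [Module.Projective S Q]
    (f : P →ₗ[S] Q) (hinj : Function.Injective f)
    (hcok : ∀ q : Q, ω • q ∈ LinearMap.range f)
    (fSig : Q →ₗ[S] P)
    (h1 : ∀ q : Q, f (fSig q) = ω • q) (h2 : ∀ p : P, fSig (f p) = ω • p)
    (fbar : (P ⧸ LinearMap.range (ω • (LinearMap.id : P →ₗ[S] P))) →ₗ[S]
      (Q ⧸ LinearMap.range (ω • (LinearMap.id : Q →ₗ[S] Q))))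
    (hfbar : ∀ p : P, fbar (Submodule.Quotient.mk p) = Submodule.Quotient.mk (f p))
    (fbarSig : (Q ⧸ LinearMap.range (ω • (LinearMap.id : Q →ₗ[S] Q))) →ₗ[S]
      (P ⧸ LinearMap.range (ω • (LinearMap.id : P →ₗ[S] P))))
    (hfbarSig : ∀ q : Q,
      fbarSig (Submodule.Quotient.mk q) = Submodule.Quotient.mk (fSig q)) :
    LinearMap.ker fbar = LinearMap.range fbarSig ∧
      LinearMap.ker fbarSig = LinearMap.range fbar := by
  have regP := proj_smul_reg (M := P) hreg
  have regQ := proj_smul_reg (M := Q) hreg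
  have memP : ∀ p : P, p ∈ LinearMap.range (ω • (LinearMap.id : P →ₗ[S] P)) ↔
      ∃ y : P, ω • y = p := by
    intro p; constructor
    · rintro ⟨y, rfl⟩; exact ⟨y, rfl⟩
    · rintro ⟨y, rfl⟩; exact ⟨y, rfl⟩
  have memQ : ∀ q : Q, q ∈ LinearMap.range (ω • (LinearMap.id : Q →ₗ[S] Q)) ↔
      ∃ y : Q, ω • y = q := by
    intro q; constructor
    · rintro ⟨y, rfl⟩; exact ⟨y, rfl⟩
    · rintro ⟨y, rfl⟩; exact ⟨y, rfl⟩
  constructor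
  · ext x
    obtain ⟨p, rfl⟩ := Submodule.Quotient.mk_surjective _ x
    constructor
    · intro hx
      rw [LinearMap.mem_ker, hfbar, Submodule.Quotient.mk_eq_zero, memQ] at hx
      obtain ⟨q, hq⟩ := hx
      refine ⟨Submodule.Quotient.mk q, ?_⟩
      rw [hfbarSig]
      have hsm : ω • fSig q = ω • p := by
        rw [← h2 p, ← hq, map_smul]
      have h0 : ω • (fSig q - p) = 0 := by rw [smul_sub, hsm, sub_self]
      rw [sub_eq_zero.mp (regP _ h0)]
    · rintro ⟨y, hy⟩
      obtain ⟨q, rfl⟩ := Submodule.Quotient.mk_surjective _ y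
      rw [hfbarSig] at hy
      rw [LinearMap.mem_ker, ← hy, hfbar, Submodule.Quotient.mk_eq_zero, memQ]
      exact ⟨q, (h1 q).symm⟩
  · ext x
    obtain ⟨q, rfl⟩ := Submodule.Quotient.mk_surjective _ x
    constructor
    · intro hx
      rw [LinearMap.mem_ker, hfbarSig, Submodule.Quotient.mk_eq_zero, memP] at hx
      obtain ⟨p, hp⟩ := hx
      refine ⟨Submodule.Quotient.mk p, ?_⟩
      rw [hfbar]
      have hsm : ω • f p = ω • q := by
        rw [← h1 q, ← hp, map_smul]
      have h0 : ω • (f p - q) = 0 := by rw [smul_sub, hsm, sub_self]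
      rw [sub_eq_zero.mp (regQ _ h0)]
    · rintro ⟨y, hy⟩
      obtain ⟨p, rfl⟩ := Submodule.Quotient.mk_surjective _ y
      rw [hfbar] at hy
      rw [LinearMap.mem_ker, ← hy, hfbarSig, Submodule.Quotient.mk_eq_zero, memP]
      exact ⟨p, (h2 p).symm⟩
end

section
/- Let S be a commutative noetherian local ring with maximal ideal n and ω ∈ n a non-zerodivisor. Let f : P → Q be an injective S-linear map between finitely generated projective S-modules whose cokernel Q/f(P) is annihilated by ω, and let f̄ : P/ωP → Q/ωQ be the induced map on quotients. Then there are S-linear isomorphisms ker(f̄) ≅ Q/f(P) and (Q/ωQ)/image(f̄) ≅ Q/f(P); that is, the sequence 0 → Coker f → P/ωP →f̄ Q/ωQ → Coker f → 0 is exact, so Coker f has a 2-periodic projective resolution over S/(ω). -/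
universe u

/-- for `f̄ : P/ωP → Q/ωQ` induced by `f`, we have
`ker f̄ ≅ Coker f` and `(Q/ωQ)/im f̄ ≅ Coker f`; that is, the sequence
`0 → Coker f → P/ωP → Q/ωQ → Coker f → 0` is exact. -/
theorem stmt_9 {S : Type u} [CommRing S] [IsNoetherianRing S] [IsLocalRing S]
    (ω : S) (hω : ω ∈ IsLocalRing.maximalIdeal S) (hreg : ω ∈ nonZeroDivisors S)
    {P Q : Type u} [AddCommGroup P] [Module S P] [AddCommGroup Q] [Module S Q]
    [Module.Finite S P] [Module.Projective S P]
    [Module.Finite S Q] [Module.Projective S Q]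
    (f : P →ₗ[S] Q) (hinj : Function.Injective f)
    (hcok : ∀ q : Q, ω • q ∈ LinearMap.range f)
    (fbar : (P ⧸ LinearMap.range (ω • (LinearMap.id : P →ₗ[S] P))) →ₗ[S]
      (Q ⧸ LinearMap.range (ω • (LinearMap.id : Q →ₗ[S] Q))))
    (hfbar : ∀ p : P, fbar (Submodule.Quotient.mk p) = Submodule.Quotient.mk (f p)) :
    Nonempty ((LinearMap.ker fbar) ≃ₗ[S] (Q ⧸ LinearMap.range f)) ∧
      Nonempty (((Q ⧸ LinearMap.range (ω • (LinearMap.id : Q →ₗ[S] Q))) ⧸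
          LinearMap.range fbar) ≃ₗ[S] (Q ⧸ LinearMap.range f)) := by
  -- ω acts injectively on Q since Q is projective and ω is a nonzerodivisor
  have hQreg : ∀ q q' : Q, ω • q = ω • q' → q = q' := by
    obtain ⟨s, hs⟩ := (Module.projective_def (R := S) (P := Q)).mp ‹_›
    intro q q' h
    have hs2 : ω • s q = ω • s q' := by rw [← map_smul, ← map_smul, h]
    have : s q = s q' := by
      ext a
      have := congrFun (congrArg DFunLike.coe hs2) a
      simp only [Finsupp.smul_apply, smul_eq_mul] at this
      have hsub : (s q a - s q' a) * ω = 0 := by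
        rw [sub_mul, mul_comm (s q a), mul_comm (s q' a), this, sub_self]
      exact sub_eq_zero.mp (hreg.2 _ hsub)
    calc q = Finsupp.linearCombination S id (s q) := (hs q).symm
      _ = Finsupp.linearCombination S id (s q') := by rw [this]
      _ = q' := hs q'
  have memNP : ∀ p : P, p ∈ LinearMap.range (ω • (LinearMap.id : P →ₗ[S] P)) ↔
      ∃ p', ω • p' = p := by
    intro p; simp [LinearMap.mem_range]
  have memNQ : ∀ q : Q, q ∈ LinearMap.range (ω • (LinearMap.id : Q →ₗ[S] Q)) ↔
      ∃ q', ω • q' = q := by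
    intro q; simp [LinearMap.mem_range]
  -- the "division by ω" map g : Q → P with f (g q) = ω • q
  have hex : ∀ q : Q, ∃ p : P, f p = ω • q := by
    intro q; obtain ⟨p, hp⟩ := hcok q; exact ⟨p, hp⟩
  choose g hg using hex
  have glin : ∀ (c : S) (q q' : Q), g (c • q + q') = c • g q + g q' := by
    intro c q q'
    apply hinj
    rw [hg, map_add, map_smul, hg, hg, smul_add, smul_comm]
  let G : Q →ₗ[S] P :=
    { toFun := g
      map_add' := fun q q' => by simpa using glin 1 q q'
      map_smul' := fun c q => by
        have := glin c q 0
        have h0 : g (0 : Q) = 0 := hinj (by rw [hg]; simp)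
        simpa [h0] using this }
  have hGapp : ∀ q : Q, G q = g q := fun _ => rfl
  -- first isomorphism: ker fbar ≃ Q ⧸ range f
  have hfirst : Nonempty ((LinearMap.ker fbar) ≃ₗ[S] (Q ⧸ LinearMap.range f)) := by
    let G1 : Q →ₗ[S] (P ⧸ LinearMap.range (ω • (LinearMap.id : P →ₗ[S] P))) :=
      (LinearMap.range (ω • (LinearMap.id : P →ₗ[S] P))).mkQ.comp G
    have hG1 : ∀ q : Q, G1 q = Submodule.Quotient.mk (g q) := fun _ => rfl
    have hmem : ∀ q : Q, G1 q ∈ LinearMap.ker fbar := by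
      intro q
      rw [LinearMap.mem_ker, hG1, hfbar, hg]
      exact (Submodule.Quotient.mk_eq_zero _).mpr ((memNQ _).mpr ⟨q, rfl⟩)
    let G2 : Q →ₗ[S] (LinearMap.ker fbar) := G1.codRestrict _ hmem
    have hker : LinearMap.range f ≤ LinearMap.ker G2 := by
      rintro _ ⟨p, rfl⟩
      have hgfp : g (f p) = ω • p := hinj (by rw [hg, map_smul])
      have : G1 (f p) = 0 := by
        rw [hG1, hgfp]
        exact (Submodule.Quotient.mk_eq_zero _).mpr ((memNP _).mpr ⟨p, rfl⟩)
      exact Subtype.ext this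
    let Φ : (Q ⧸ LinearMap.range f) →ₗ[S] (LinearMap.ker fbar) :=
      (LinearMap.range f).liftQ G2 hker
    have hΦbij : Function.Bijective Φ := by
      constructor
      · rw [← LinearMap.ker_eq_bot, LinearMap.ker_eq_bot']
        intro m hm
        obtain ⟨q, rfl⟩ := Submodule.Quotient.mk_surjective _ m
        have h1 : G2 q = 0 := by
          simpa [Φ, Submodule.liftQ_apply] using hm
        have h2 : G1 q = 0 := congrArg Subtype.val h1
        rw [hG1] at h2
        have h3 := (Submodule.Quotient.mk_eq_zero _).mp h2
        obtain ⟨p, hp⟩ := (memNP _).mp h3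
        have : f p = q := by
          apply hQreg
          rw [← hg q, ← hp, map_smul]
        exact (Submodule.Quotient.mk_eq_zero _).mpr ⟨p, this⟩
      · rintro ⟨x, hx⟩
        obtain ⟨p, rfl⟩ := Submodule.Quotient.mk_surjective _ x
        have hfp : f p ∈ LinearMap.range (ω • (LinearMap.id : Q →ₗ[S] Q)) := by
          rw [LinearMap.mem_ker, hfbar] at hx
          exact (Submodule.Quotient.mk_eq_zero _).mp hx
        obtain ⟨q, hq⟩ := (memNQ _).mp hfp
        refine ⟨Submodule.Quotient.mk q, ?_⟩
        have hgq : g q = p := hinj (by rw [hg, hq])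
        apply Subtype.ext
        show G1 q = Submodule.Quotient.mk p
        rw [hG1, hgq]
    exact ⟨(LinearEquiv.ofBijective Φ hΦbij).symm⟩
  refine ⟨hfirst, ?_⟩
  -- second isomorphism
  have hle : LinearMap.range (ω • (LinearMap.id : Q →ₗ[S] Q)) ≤ LinearMap.range f := by
    intro q hq
    obtain ⟨q', rfl⟩ := (memNQ _).mp hq
    exact hcok q'
  have hrange : LinearMap.range fbar =
      (LinearMap.range f).map (LinearMap.range (ω • (LinearMap.id : Q →ₗ[S] Q))).mkQ := by
    ext x
    constructor
    · rintro ⟨y, rfl⟩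
      obtain ⟨p, rfl⟩ := Submodule.Quotient.mk_surjective _ y
      exact ⟨f p, ⟨p, rfl⟩, (hfbar p).symm⟩
    · rintro ⟨_, ⟨p, rfl⟩, rfl⟩
      exact ⟨Submodule.Quotient.mk p, hfbar p⟩
  rw [hrange]
  exact ⟨Submodule.quotientQuotientEquivQuotient _ (LinearMap.range f) hle⟩
end

section
/- Let S be a commutative noetherian local ring with maximal ideal n, ω ∈ n a non-zerodivisor, and R = S/(ω). Let f : P → Q be an injective S-linear map between finitely generated projective S-modules whose cokernel is annihilated by ω, with f_Σ : Q → P the unique map satisfying f ∘ f_Σ = ω·id_Q and f_Σ ∘ f = ω·id_P, and let f̄ : P/ωP → Q/ωQ and f̄_Σ : Q/ωQ → P/ωP be the induced maps of R-modules. Applying the R-dual functor (−)^∨ = Hom_R(−, R), the resulting 2-periodic complex is exact: ker(f̄^∨) = image(f̄_Σ^∨) and ker(f̄_Σ^∨) = image(f̄^∨), where f̄^∨ : (Q/ωQ)^∨ → (P/ωP)^∨ and f̄_Σ^∨ : (P/ωP)^∨ → (Q/ωQ)^∨ are the dual maps. (Hence the 2-periodic complex of projective R-modules associated to f is totally acyclic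 and Coker f is a Gorenstein projective R-module.) -/
set_option maxHeartbeats 4000000


universe u

/-- Division by a non-zerodivisor: if every value of `g` is divisible by `ω`,
then `g = ω • h` for a (unique) linear map `h`. -/
lemma aux_div {S : Type u} [CommRing S] {M : Type u} [AddCommGroup M] [Module S M]
    (ω : S) (hreg : ω ∈ nonZeroDivisors S) (g : M →ₗ[S] S) (hdvd : ∀ m, ω ∣ g m) :
    ∃ h : M →ₗ[S] S, ∀ m, ω * h m = g m := by
  choose c hc using hdvd
  refine ⟨{ toFun := c, map_add' := ?_, map_smul' := ?_ }, fun m => (hc m).symm⟩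
  · intro x y
    rw [← mul_cancel_left_mem_nonZeroDivisors hreg, mul_add, ← hc, ← hc, ← hc, map_add]
  · intro s x
    rw [← mul_cancel_left_mem_nonZeroDivisors hreg]
    show ω * c (s • x) = ω * (RingHom.id S s • c x)
    rw [← hc, map_smul, smul_eq_mul, hc, RingHom.id_apply, smul_eq_mul]
    ring

/-- One inclusion `ker (f̄^∨) ≤ im (f̄_Σ^∨)`, stated symmetrically so it can be
applied twice. -/
lemma aux_ker_le {S : Type u} [CommRing S]
    (ω : S) (hreg : ω ∈ nonZeroDivisors S)
    {P Q : Type u} [AddCommGroup P] [Module S P] [AddCommGroup Q] [Module S Q]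
    [Module.Projective S Q]
    (f : P →ₗ[S] Q) (fSig : Q →ₗ[S] P)
    (h1 : ∀ q : Q, f (fSig q) = ω • q)
    [Module (S ⧸ Ideal.span {ω})
      (P ⧸ LinearMap.range (ω • (LinearMap.id : P →ₗ[S] P)))]
    [IsScalarTower S (S ⧸ Ideal.span {ω})
      (P ⧸ LinearMap.range (ω • (LinearMap.id : P →ₗ[S] P)))]
    [Module (S ⧸ Ideal.span {ω})
      (Q ⧸ LinearMap.range (ω • (LinearMap.id : Q →ₗ[S] Q)))]
    [IsScalarTower S (S ⧸ Ideal.span {ω})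
      (Q ⧸ LinearMap.range (ω • (LinearMap.id : Q →ₗ[S] Q)))]
    (fbar : (P ⧸ LinearMap.range (ω • (LinearMap.id : P →ₗ[S] P))) →ₗ[S ⧸ Ideal.span {ω}]
      (Q ⧸ LinearMap.range (ω • (LinearMap.id : Q →ₗ[S] Q))))
    (hfbar : ∀ p : P, fbar (Submodule.Quotient.mk p) = Submodule.Quotient.mk (f p))
    (fbarSig : (Q ⧸ LinearMap.range (ω • (LinearMap.id : Q →ₗ[S] Q))) →ₗ[S ⧸ Ideal.span {ω}]
      (P ⧸ LinearMap.range (ω • (LinearMap.id : P →ₗ[S] P))))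
    (hfbarSig : ∀ q : Q,
      fbarSig (Submodule.Quotient.mk q) = Submodule.Quotient.mk (fSig q)) :
    LinearMap.ker fbar.dualMap ≤ LinearMap.range fbarSig.dualMap := by
  intro φ hφ
  rw [LinearMap.mem_ker] at hφ
  have hφ0 : ∀ p : P, φ (Submodule.Quotient.mk (f p)) = 0 := by
    intro p
    have := congrArg (fun g => g (Submodule.Quotient.mk p)) hφ
    simpa [LinearMap.dualMap_apply, hfbar p] using this
  -- lift φ composed with the quotient map to a map Φ : Q →ₗ[S] S
  obtain ⟨Φ, hΦ⟩ := Module.projective_lifting_property (Ideal.span {ω}).mkQ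
    ((φ.restrictScalars S).comp (LinearMap.range (ω • (LinearMap.id : Q →ₗ[S] Q))).mkQ)
    (Submodule.mkQ_surjective _)
  have hΦ' : ∀ q : Q, (Ideal.Quotient.mk (Ideal.span {ω})) (Φ q)
      = φ (Submodule.Quotient.mk q) := by
    intro q
    exact congrArg (fun g => g q) hΦ
  -- each Φ (f p) is divisible by ω
  have hdvd : ∀ p : P, ω ∣ (Φ.comp f) p := by
    intro p
    have : (Ideal.Quotient.mk (Ideal.span {ω})) (Φ (f p)) = 0 := by
      rw [hΦ' (f p)]; exact hφ0 p
    rwa [Ideal.Quotient.eq_zero_iff_mem, Ideal.mem_span_singleton] at this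
  obtain ⟨Ψ, hΨ⟩ := aux_div ω hreg (Φ.comp f) hdvd
  -- key computation: Ψ (fSig q) = Φ q
  have hkey : ∀ q : Q, Ψ (fSig q) = Φ q := by
    intro q
    rw [← mul_cancel_left_mem_nonZeroDivisors hreg, hΨ, LinearMap.comp_apply, h1,
      map_smul, smul_eq_mul]
  -- the map P/ωP →ₗ[S] R induced by Ψ
  have hker : LinearMap.range (ω • (LinearMap.id : P →ₗ[S] P)) ≤
      LinearMap.ker ((Ideal.span {ω}).mkQ.comp Ψ) := by
    rintro _ ⟨p, rfl⟩
    have hmem : Ψ (ω • p) ∈ Ideal.span {ω} := by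
      rw [map_smul, smul_eq_mul, Ideal.mem_span_singleton]
      exact Dvd.intro _ rfl
    simp only [LinearMap.mem_ker, LinearMap.comp_apply, LinearMap.smul_apply,
      LinearMap.id_apply, Submodule.mkQ_apply, Submodule.Quotient.mk_eq_zero]
    exact hmem
  set ψ0 : (P ⧸ LinearMap.range (ω • (LinearMap.id : P →ₗ[S] P))) →ₗ[S] (S ⧸ Ideal.span {ω}) :=
    Submodule.liftQ _ ((Ideal.span {ω}).mkQ.comp Ψ) hker with hψ0def
  have hψ0 : ∀ p : P, ψ0 (Submodule.Quotient.mk p)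
      = (Ideal.Quotient.mk (Ideal.span {ω})) (Ψ p) := fun p => rfl
  -- upgrade to R-linearity
  have hsmul : ∀ (r : S ⧸ Ideal.span {ω})
      (x : P ⧸ LinearMap.range (ω • (LinearMap.id : P →ₗ[S] P))),
      ψ0 (r • x) = r • ψ0 x := by
    intro r x
    obtain ⟨s, rfl⟩ := Ideal.Quotient.mk_surjective r
    have h1' : (Ideal.Quotient.mk (Ideal.span {ω}) s) • x = s • x := by
      rw [← Ideal.Quotient.algebraMap_eq, algebraMap_smul]
    have h2' : (Ideal.Quotient.mk (Ideal.span {ω}) s) • ψ0 x = s • ψ0 x := by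
      rw [← Ideal.Quotient.algebraMap_eq, algebraMap_smul]
    rw [h1', h2', map_smul]
  set ψ : (P ⧸ LinearMap.range (ω • (LinearMap.id : P →ₗ[S] P)))
      →ₗ[S ⧸ Ideal.span {ω}] (S ⧸ Ideal.span {ω}) :=
    { toFun := ψ0, map_add' := map_add ψ0, map_smul' := hsmul } with hψdef
  refine ⟨ψ, ?_⟩
  ext x
  obtain ⟨q, rfl⟩ := Submodule.Quotient.mk_surjective _ x
  show ψ (fbarSig (Submodule.Quotient.mk q)) = φ (Submodule.Quotient.mk q)
  rw [hfbarSig q]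
  show ψ0 (Submodule.Quotient.mk (fSig q)) = _
  rw [hψ0, hkey, hΦ']

/-- The other inclusion `im (f̄_Σ^∨) ≤ ker (f̄^∨)`, also stated symmetrically. -/
lemma aux_range_le {S : Type u} [CommRing S]
    (ω : S)
    {P Q : Type u} [AddCommGroup P] [Module S P] [AddCommGroup Q] [Module S Q]
    (f : P →ₗ[S] Q) (fSig : Q →ₗ[S] P)
    (h2 : ∀ p : P, fSig (f p) = ω • p)
    [Module (S ⧸ Ideal.span {ω})
      (P ⧸ LinearMap.range (ω • (LinearMap.id : P →ₗ[S] P)))]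
    [Module (S ⧸ Ideal.span {ω})
      (Q ⧸ LinearMap.range (ω • (LinearMap.id : Q →ₗ[S] Q)))]
    (fbar : (P ⧸ LinearMap.range (ω • (LinearMap.id : P →ₗ[S] P))) →ₗ[S ⧸ Ideal.span {ω}]
      (Q ⧸ LinearMap.range (ω • (LinearMap.id : Q →ₗ[S] Q))))
    (hfbar : ∀ p : P, fbar (Submodule.Quotient.mk p) = Submodule.Quotient.mk (f p))
    (fbarSig : (Q ⧸ LinearMap.range (ω • (LinearMap.id : Q →ₗ[S] Q))) →ₗ[S ⧸ Ideal.span {ω}]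
      (P ⧸ LinearMap.range (ω • (LinearMap.id : P →ₗ[S] P))))
    (hfbarSig : ∀ q : Q,
      fbarSig (Submodule.Quotient.mk q) = Submodule.Quotient.mk (fSig q)) :
    LinearMap.range fbarSig.dualMap ≤ LinearMap.ker fbar.dualMap := by
  rintro _ ⟨ψ, rfl⟩
  rw [LinearMap.mem_ker]
  ext x
  obtain ⟨p, rfl⟩ := Submodule.Quotient.mk_surjective _ x
  show ψ (fbarSig (fbar (Submodule.Quotient.mk p))) = 0
  rw [hfbar p, hfbarSig (f p), h2 p]
  have : (Submodule.Quotient.mk (ω • p) :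
      P ⧸ LinearMap.range (ω • (LinearMap.id : P →ₗ[S] P))) = 0 := by
    rw [Submodule.Quotient.mk_eq_zero]
    exact ⟨p, rfl⟩
  rw [this, map_zero]

/-- applying `Hom_R(-, R)` (with `R = S/(ω)`) to the `2`-periodic complex
`⋯ → P/ωP →f̄ Q/ωQ →f̄_Σ P/ωP → ⋯` yields an exact complex:
`ker (f̄^∨) = im (f̄_Σ^∨)` and `ker (f̄_Σ^∨) = im (f̄^∨)`.  (Hence the `2`-periodic
complex of projective `R`-modules is totally acyclic and `Coker f` is Gorenstein
projective over `R`.) -/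
theorem stmt_11 {S : Type u} [CommRing S] [IsNoetherianRing S] [IsLocalRing S]
    (ω : S) (hω : ω ∈ IsLocalRing.maximalIdeal S) (hreg : ω ∈ nonZeroDivisors S)
    {P Q : Type u} [AddCommGroup P] [Module S P] [AddCommGroup Q] [Module S Q]
    [Module.Finite S P] [Module.Projective S P]
    [Module.Finite S Q] [Module.Projective S Q]
    (f : P →ₗ[S] Q) (hinj : Function.Injective f)
    (hcok : ∀ q : Q, ω • q ∈ LinearMap.range f)
    (fSig : Q →ₗ[S] P)
    (h1 : ∀ q : Q, f (fSig q) = ω • q) (h2 : ∀ p : P, fSig (f p) = ω • p)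
    [Module (S ⧸ Ideal.span {ω})
      (P ⧸ LinearMap.range (ω • (LinearMap.id : P →ₗ[S] P)))]
    [IsScalarTower S (S ⧸ Ideal.span {ω})
      (P ⧸ LinearMap.range (ω • (LinearMap.id : P →ₗ[S] P)))]
    [Module (S ⧸ Ideal.span {ω})
      (Q ⧸ LinearMap.range (ω • (LinearMap.id : Q →ₗ[S] Q)))]
    [IsScalarTower S (S ⧸ Ideal.span {ω})
      (Q ⧸ LinearMap.range (ω • (LinearMap.id : Q →ₗ[S] Q)))]
    (fbar : (P ⧸ LinearMap.range (ω • (LinearMap.id : P →ₗ[S] P))) →ₗ[S ⧸ Ideal.span {ω}]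
      (Q ⧸ LinearMap.range (ω • (LinearMap.id : Q →ₗ[S] Q))))
    (hfbar : ∀ p : P, fbar (Submodule.Quotient.mk p) = Submodule.Quotient.mk (f p))
    (fbarSig : (Q ⧸ LinearMap.range (ω • (LinearMap.id : Q →ₗ[S] Q))) →ₗ[S ⧸ Ideal.span {ω}]
      (P ⧸ LinearMap.range (ω • (LinearMap.id : P →ₗ[S] P))))
    (hfbarSig : ∀ q : Q,
      fbarSig (Submodule.Quotient.mk q) = Submodule.Quotient.mk (fSig q)) :
    LinearMap.ker fbar.dualMap = LinearMap.range fbarSig.dualMap ∧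
      LinearMap.ker fbarSig.dualMap = LinearMap.range fbar.dualMap := by
  constructor
  · exact le_antisymm
      (aux_ker_le ω hreg f fSig h1 fbar hfbar fbarSig hfbarSig)
      (aux_range_le ω f fSig h2 fbar hfbar fbarSig hfbarSig)
  · exact le_antisymm
      (aux_ker_le ω hreg fSig f h2 fbarSig hfbarSig fbar hfbar)
      (aux_range_le ω fSig f h1 fbarSig hfbarSig fbar hfbar)
end

section
/- Let S be a commutative noetherian local ring with maximal ideal n and ω ∈ n a non-zerodivisor. Let f : P → Q and f' : P' → Q' be injective S-linear maps between finitely generated projective S-modules whose cokernels are annihilated by ω, and let (ψ₁,ψ₀) be a morphism from (P →f Q) to (P' →f' Q'). Then (ψ₁,ψ₀) is null-homotopic if and only if it factors through an object of the form (P₁ × Q₁ →(ω·id ⊕ id) P₁ × Q₁) with P₁, Q₁ finitely generated projective S-modules; i.e., if and only if there exist finitely generated projective S-modules P₁, Q₁ and S-linear maps a : P → P₁ × Q₁, b : Q → P₁ × Q₁, a' : P₁ × Q₁ → P', b' : P₁ × Q₁ → Q' such that (ω·id_{P₁} ⊕ id_{Q₁}) ∘ a = b ∘ f, f' ∘ a'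 = b' ∘ (ω·id_{P₁} ⊕ id_{Q₁}), ψ₁ = a' ∘ a and ψ₀ = b' ∘ b. -/
universe u

/-- a morphism `(ψ₁, ψ₀)` is null-homotopic iff it factors through an
object of the form `(P₁ × Q₁ →(ω·id ⊕ id) P₁ × Q₁)` with `P₁, Q₁` finitely generated
projective. -/
theorem stmt_12 {S : Type u} [CommRing S] [IsNoetherianRing S] [IsLocalRing S]
    (ω : S) (hω : ω ∈ IsLocalRing.maximalIdeal S) (hreg : ω ∈ nonZeroDivisors S)
    {P Q P' Q' : Type u} [AddCommGroup P] [Module S P] [AddCommGroup Q] [Module S Q]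
    [AddCommGroup P'] [Module S P'] [AddCommGroup Q'] [Module S Q']
    [Module.Finite S P] [Module.Projective S P]
    [Module.Finite S Q] [Module.Projective S Q]
    [Module.Finite S P'] [Module.Projective S P']
    [Module.Finite S Q'] [Module.Projective S Q']
    (f : P →ₗ[S] Q) (hinj : Function.Injective f)
    (hcok : ∀ q : Q, ω • q ∈ LinearMap.range f)
    (f' : P' →ₗ[S] Q') (hinj' : Function.Injective f')
    (hcok' : ∀ q : Q', ω • q ∈ LinearMap.range f')
    (ψ₁ : P →ₗ[S] P') (ψ₀ : Q →ₗ[S] Q')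
    (hcomm : ∀ p : P, ψ₀ (f p) = f' (ψ₁ p)) :
    (∃ (s₁ : P →ₗ[S] Q') (s₀ : Q →ₗ[S] P'),
        ∀ p : P, ψ₀ (f p) - f' (s₀ (f p)) = ω • s₁ p) ↔
    (∃ (P₁ Q₁ : Type u) (_ : AddCommGroup P₁) (_ : Module S P₁)
        (_ : Module.Finite S P₁) (_ : Module.Projective S P₁)
        (_ : AddCommGroup Q₁) (_ : Module S Q₁)
        (_ : Module.Finite S Q₁) (_ : Module.Projective S Q₁)
        (a : P →ₗ[S] P₁ × Q₁) (b : Q →ₗ[S] P₁ × Q₁)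
        (a' : P₁ × Q₁ →ₗ[S] P') (b' : P₁ × Q₁ →ₗ[S] Q'),
        (∀ p : P, (ω • (a p).1, (a p).2) = b (f p)) ∧
        (∀ x : P₁ × Q₁, f' (a' x) = b' (ω • x.1, x.2)) ∧
        (∀ p : P, ψ₁ p = a' (a p)) ∧ (∀ q : Q, ψ₀ q = b' (b q))) := by
  constructor
  · rintro ⟨s₁, s₀, hs⟩
    -- g : Q' → P' with f' ∘ g = ω • id
    have hgex : ∀ q' : Q', ∃ p' : P', f' p' = ω • q' := fun q' =>
      LinearMap.mem_range.mp (hcok' q')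
    choose gfun hg using hgex
    let g : Q' →ₗ[S] P' := {
      toFun := gfun
      map_add' := by
        intro x y
        apply hinj'
        simp [hg, smul_add]
      map_smul' := by
        intro c x
        apply hinj'
        simp [hg, smul_comm ω c] }
    have hgapp : ∀ q', f' (g q') = ω • q' := hg
    refine ⟨Q', Q, inferInstance, inferInstance, inferInstance, inferInstance,
      inferInstance, inferInstance, inferInstance, inferInstance,
      LinearMap.prod s₁ f,
      LinearMap.prod (ψ₀ - f'.comp s₀) LinearMap.id,
      g.comp (LinearMap.fst S Q' Q) + s₀.comp (LinearMap.snd S Q' Q),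
      LinearMap.fst S Q' Q + (f'.comp s₀).comp (LinearMap.snd S Q' Q),
      ?_, ?_, ?_, ?_⟩
    · intro p
      have := hs p
      simp only [LinearMap.prod_apply, Pi.prod, LinearMap.sub_apply,
        LinearMap.comp_apply, LinearMap.id_apply, LinearMap.add_apply]
      exact congrArg (·, f p) (hs p).symm
    · intro x
      simp only [LinearMap.add_apply, LinearMap.comp_apply, LinearMap.fst_apply,
        LinearMap.snd_apply, map_add, hgapp]
    · intro p
      apply hinj'
      simp only [LinearMap.add_apply, LinearMap.comp_apply, LinearMap.fst_apply,
        LinearMap.snd_apply, LinearMap.prod_apply, Function.prod, map_add, hgapp]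
      rw [← hcomm p, ← hs p]
      abel
    · intro q
      simp only [LinearMap.add_apply, LinearMap.comp_apply, LinearMap.fst_apply,
        LinearMap.snd_apply, LinearMap.prod_apply, Function.prod, LinearMap.sub_apply,
        LinearMap.id_apply]
      abel
  · rintro ⟨P₁, Q₁, _, _, _, _, _, _, _, _, a, b, a', b', h1, h2, h3, h4⟩
    refine ⟨b'.comp ((LinearMap.inl S P₁ Q₁).comp ((LinearMap.fst S P₁ Q₁).comp a)),
      a'.comp ((LinearMap.inr S P₁ Q₁).comp ((LinearMap.snd S P₁ Q₁).comp b)), ?_⟩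
    intro p
    have hb : b (f p) = (ω • (a p).1, (a p).2) := (h1 p).symm
    simp only [LinearMap.comp_apply, LinearMap.inl_apply, LinearMap.inr_apply,
      LinearMap.fst_apply, LinearMap.snd_apply, hb]
    rw [h4 (f p), hb, h2 ((0 : P₁), (a p).2)]
    have : ((ω • (a p).1, (a p).2) : P₁ × Q₁) = (ω • (a p).1, 0) + (ω • (0:P₁), (a p).2) := by
      simp
    rw [this, map_add]
    have h5 : b' ((ω • (a p).1, (0:Q₁))) = ω • b' ((a p).1, 0) := by
      rw [← map_smul]
      simp [Prod.smul_mk]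
    rw [h5]
    abel
end

section
/- Let S be a commutative noetherian local ring with maximal ideal n and ω ∈ n a non-zerodivisor. Let f : P → Q and f' : P' → Q' be injective S-linear maps between finitely generated projective S-modules whose cokernels are annihilated by ω, with quotient maps π : Q → Q/f(P) and π' : Q' → Q'/f'(P'). Then for every S-linear map h : Q/f(P) → Q'/f'(P') there exist S-linear maps ψ₁ : P → P' and ψ₀ : Q → Q' such that ψ₀ ∘ f = f' ∘ ψ₁ and π' ∘ ψ₀ = h ∘ π. (This is the fullness of the cokernel functor from Mon(ω,P) to R-modules.) -/
universe u

/-- fullness of the cokernel functor: any map `h : Coker f → Coker f'`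
lifts to a morphism `(ψ₁, ψ₀) : (P →f Q) → (P' →f' Q')`. -/
theorem stmt_13 {S : Type u} [CommRing S] [IsNoetherianRing S] [IsLocalRing S]
    (ω : S) (hω : ω ∈ IsLocalRing.maximalIdeal S) (hreg : ω ∈ nonZeroDivisors S)
    {P Q P' Q' : Type u} [AddCommGroup P] [Module S P] [AddCommGroup Q] [Module S Q]
    [AddCommGroup P'] [Module S P'] [AddCommGroup Q'] [Module S Q']
    [Module.Finite S P] [Module.Projective S P]
    [Module.Finite S Q] [Module.Projective S Q]
    [Module.Finite S P'] [Module.Projective S P']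
    [Module.Finite S Q'] [Module.Projective S Q']
    (f : P →ₗ[S] Q) (hinj : Function.Injective f)
    (hcok : ∀ q : Q, ω • q ∈ LinearMap.range f)
    (f' : P' →ₗ[S] Q') (hinj' : Function.Injective f')
    (hcok' : ∀ q : Q', ω • q ∈ LinearMap.range f')
    (h : (Q ⧸ LinearMap.range f) →ₗ[S] (Q' ⧸ LinearMap.range f')) :
    ∃ (ψ₁ : P →ₗ[S] P') (ψ₀ : Q →ₗ[S] Q'),
      (∀ p : P, ψ₀ (f p) = f' (ψ₁ p)) ∧
      (∀ q : Q, (Submodule.Quotient.mk (ψ₀ q) : Q' ⧸ LinearMap.range f') =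
        h (Submodule.Quotient.mk q)) := by
  obtain ⟨ψ₀, hψ₀⟩ := Module.projective_lifting_property
    (Submodule.mkQ (LinearMap.range f'))
    (h ∘ₗ Submodule.mkQ (LinearMap.range f))
    (Submodule.mkQ_surjective _)
  have key : ∀ p : P, ψ₀ (f p) ∈ LinearMap.range f' := by
    intro p
    have := congrArg (fun g : Q →ₗ[S] _ => g (f p)) hψ₀
    simp only [LinearMap.comp_apply, Submodule.mkQ_apply] at this
    rw [← Submodule.Quotient.mk_eq_zero]
    rw [this]
    have : (Submodule.Quotient.mk (f p) : Q ⧸ LinearMap.range f) = 0 := by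
      rw [Submodule.Quotient.mk_eq_zero]; exact ⟨p, rfl⟩
    rw [this, map_zero]
  let e := LinearEquiv.ofInjective f' hinj'
  let ψ₁ : P →ₗ[S] P' := e.symm.toLinearMap ∘ₗ
    LinearMap.codRestrict (LinearMap.range f') (ψ₀ ∘ₗ f) key
  refine ⟨ψ₁, ψ₀, fun p => ?_, fun q => ?_⟩
  · have : f' (ψ₁ p) = (e (ψ₁ p) : Q') := rfl
    rw [this]
    simp only [ψ₁, LinearMap.comp_apply, LinearEquiv.coe_coe, LinearEquiv.apply_symm_apply]
    rfl
  · have := congrArg (fun g : Q →ₗ[S] _ => g q) hψ₀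
    simpa using this
end

section
/- Let S be a commutative noetherian local ring with maximal ideal n and ω ∈ n a non-zerodivisor. Let f : P → Q and f' : P' → Q' be injective S-linear maps between finitely generated projective S-modules whose cokernels are annihilated by ω, let (ψ₁,ψ₀) be a morphism from (P →f Q) to (P' →f' Q'), and let h : Q/f(P) → Q'/f'(P') be the induced map on cokernels (so π' ∘ ψ₀ = h ∘ π). If h factors through a module of the form P₁/ωP₁ with P₁ a finitely generated projective S-module — i.e., there exist S-linear maps α : Q/f(P) → P₁/ωP₁ and β : P₁/ωP₁ → Q'/f'(P') with h = β ∘ α — then (ψ₁,ψ₀) is null-homotopic: there exist S-linear maps s₁ : P → Q' and s₀ : Q → P' with ψ₀ ∘ f − f' ∘ s₀ ∘ f = ω·s₁. (This is the faithfulness of the cokernel functor from the homotopy category HMon(ω,P) to the stable category of Gorenstein projective R-modules.) -/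
universe u

lemma lift_of_range_le {S : Type u} [CommRing S] {A B C : Type u}
    [AddCommGroup A] [Module S A] [AddCommGroup B] [Module S B]
    [AddCommGroup C] [Module S C]
    (g : A →ₗ[S] B) (hg : Function.Injective g) (t : C →ₗ[S] B)
    (ht : ∀ c, t c ∈ LinearMap.range g) :
    ∃ u : C →ₗ[S] A, ∀ c, g (u c) = t c := by
  refine ⟨((LinearEquiv.ofInjective g hg).symm : LinearMap.range g →ₗ[S] A).comp
      (t.codRestrict _ ht), fun c => ?_⟩
  have := (LinearEquiv.ofInjective g hg).apply_symm_apply ⟨t c, ht c⟩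
  have h2 : ((LinearEquiv.ofInjective g hg)
      ((LinearEquiv.ofInjective g hg).symm ⟨t c, ht c⟩) : B) = t c := by rw [this]
  simp only [LinearMap.coe_comp, Function.comp_apply] at *
  rw [← h2, LinearEquiv.ofInjective_apply]
  rfl

lemma smul_injective_of_projective {S : Type u} [CommRing S] {P₁ : Type u}
    [AddCommGroup P₁] [Module S P₁] [Module.Projective S P₁]
    {ω : S} (hreg : ω ∈ nonZeroDivisors S) :
    Function.Injective (ω • (LinearMap.id : P₁ →ₗ[S] P₁)) := by
  obtain ⟨s, hs⟩ := Module.projective_def'.mp (inferInstance : Module.Projective S P₁)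
  intro x y hxy
  simp only [LinearMap.smul_apply, LinearMap.id_apply] at hxy
  have h0 : ω • (x - y) = 0 := by rw [smul_sub, hxy, sub_self]
  have hsx : s (x - y) = 0 := by
    have : ω • s (x - y) = 0 := by rw [← map_smul, h0, map_zero]
    ext a
    have := congrFun (congrArg DFunLike.coe this) a
    simp only [Finsupp.smul_apply, smul_eq_mul, Finsupp.coe_zero, Pi.zero_apply] at this
    exact hreg.2 _ (by rwa [mul_comm] at this)
  have hx := congrFun (congrArg DFunLike.coe hs) (x - y)
  simp only [LinearMap.coe_comp, Function.comp_apply, LinearMap.id_coe, id_eq] at hx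
  have : x - y = 0 := by rw [← hx, hsx, map_zero]
  exact sub_eq_zero.mp this


/-- faithfulness of the cokernel functor: if the induced map `h` on
cokernels factors through a module of the form `P₁/ωP₁` with `P₁` finitely generated
projective, then `(ψ₁, ψ₀)` is null-homotopic. -/
theorem stmt_14 {S : Type u} [CommRing S] [IsNoetherianRing S] [IsLocalRing S]
    (ω : S) (hω : ω ∈ IsLocalRing.maximalIdeal S) (hreg : ω ∈ nonZeroDivisors S)
    {P Q P' Q' P₁ : Type u} [AddCommGroup P] [Module S P] [AddCommGroup Q] [Module S Q]
    [AddCommGroup P'] [Module S P'] [AddCommGroup Q'] [Module S Q']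
    [AddCommGroup P₁] [Module S P₁]
    [Module.Finite S P] [Module.Projective S P]
    [Module.Finite S Q] [Module.Projective S Q]
    [Module.Finite S P'] [Module.Projective S P']
    [Module.Finite S Q'] [Module.Projective S Q']
    [Module.Finite S P₁] [Module.Projective S P₁]
    (f : P →ₗ[S] Q) (hinj : Function.Injective f)
    (hcok : ∀ q : Q, ω • q ∈ LinearMap.range f)
    (f' : P' →ₗ[S] Q') (hinj' : Function.Injective f')
    (hcok' : ∀ q : Q', ω • q ∈ LinearMap.range f')
    (ψ₁ : P →ₗ[S] P') (ψ₀ : Q →ₗ[S] Q')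
    (hcomm : ∀ p : P, ψ₀ (f p) = f' (ψ₁ p))
    (h : (Q ⧸ LinearMap.range f) →ₗ[S] (Q' ⧸ LinearMap.range f'))
    (hh : ∀ q : Q, h (Submodule.Quotient.mk q) = Submodule.Quotient.mk (ψ₀ q))
    (α : (Q ⧸ LinearMap.range f) →ₗ[S]
      (P₁ ⧸ LinearMap.range (ω • (LinearMap.id : P₁ →ₗ[S] P₁))))
    (β : (P₁ ⧸ LinearMap.range (ω • (LinearMap.id : P₁ →ₗ[S] P₁))) →ₗ[S]
      (Q' ⧸ LinearMap.range f'))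
    (hfac : ∀ x : Q ⧸ LinearMap.range f, h x = β (α x)) :
    ∃ (s₁ : P →ₗ[S] Q') (s₀ : Q →ₗ[S] P'),
      ∀ p : P, ψ₀ (f p) - f' (s₀ (f p)) = ω • s₁ p := by
  classical
  obtain ⟨a, ha⟩ := Module.projective_lifting_property
    (LinearMap.range (ω • (LinearMap.id : P₁ →ₗ[S] P₁))).mkQ
    (α.comp (LinearMap.range f).mkQ) (Submodule.mkQ_surjective _)
  obtain ⟨b, hb⟩ := Module.projective_lifting_property ((LinearMap.range f').mkQ)
    (β.comp (LinearMap.range (ω • (LinearMap.id : P₁ →ₗ[S] P₁))).mkQ)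
    (Submodule.mkQ_surjective _)
  have ha' : ∀ q : Q, (Submodule.Quotient.mk (a q) :
      P₁ ⧸ LinearMap.range (ω • (LinearMap.id : P₁ →ₗ[S] P₁)))
      = α (Submodule.Quotient.mk q) := fun q =>
    congrFun (congrArg DFunLike.coe ha) q
  have hb' : ∀ x : P₁, (Submodule.Quotient.mk (b x) : Q' ⧸ LinearMap.range f')
      = β (Submodule.Quotient.mk x) := fun x =>
    congrFun (congrArg DFunLike.coe hb) x
  have htr : ∀ q : Q, (ψ₀ - b.comp a) q ∈ LinearMap.range f' := by
    intro q
    have hmk : (Submodule.Quotient.mk (ψ₀ q) : Q' ⧸ LinearMap.range f')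
        = Submodule.Quotient.mk (b (a q)) := by
      rw [← hh, hfac, ← ha', ← hb']
    have : (Submodule.Quotient.mk ((ψ₀ - b.comp a) q) : Q' ⧸ LinearMap.range f') = 0 := by
      rw [show (ψ₀ - b.comp a) q = ψ₀ q - b (a q) from rfl,
        Submodule.Quotient.mk_sub, hmk, sub_self]
    rwa [Submodule.Quotient.mk_eq_zero] at this
  obtain ⟨s₀, hs₀⟩ := lift_of_range_le f' hinj' (ψ₀ - b.comp a) htr
  have hafr : ∀ p : P, (a.comp f) p ∈
      LinearMap.range (ω • (LinearMap.id : P₁ →ₗ[S] P₁)) := by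
    intro p
    have : (Submodule.Quotient.mk (a (f p)) :
        P₁ ⧸ LinearMap.range (ω • (LinearMap.id : P₁ →ₗ[S] P₁))) = 0 := by
      rw [ha']
      have : (Submodule.Quotient.mk (f p) : Q ⧸ LinearMap.range f) = 0 := by
        rw [Submodule.Quotient.mk_eq_zero]; exact ⟨p, rfl⟩
      rw [this, map_zero]
    rwa [Submodule.Quotient.mk_eq_zero] at this
  have hsmulinj : Function.Injective (ω • (LinearMap.id : P₁ →ₗ[S] P₁)) :=
    smul_injective_of_projective hreg
  obtain ⟨u, hu⟩ := lift_of_range_le (ω • (LinearMap.id : P₁ →ₗ[S] P₁)) hsmulinj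
    (a.comp f) hafr
  refine ⟨b.comp u, s₀, fun p => ?_⟩
  have h1 : f' (s₀ (f p)) = (ψ₀ - b.comp a) (f p) := hs₀ (f p)
  have h2 : ω • u p = a (f p) := by simpa using hu p
  simp only [LinearMap.coe_comp, Function.comp_apply]
  rw [h1]
  simp only [LinearMap.sub_apply, LinearMap.coe_comp, Function.comp_apply]
  rw [← h2, map_smul]
  abel
end

section
/- Let S be a commutative noetherian local ring with maximal ideal n and ω ∈ n a non-zerodivisor. Let f : P → Q and f' : P' → Q' be injective S-linear maps between finitely generated projective S-modules whose cokernels are annihilated by ω, let (ψ₁,ψ₀) be a morphism from (P →f Q) to (P' →f' Q'), and let h : Q/f(P) → Q'/f'(P') be the induced map on cokernels. If (ψ₁,ψ₀) is null-homotopic, then h factors through the projective R-module Q'/ωQ': there exist S-linear maps α : Q/f(P) → Q'/ωQ' and β : Q'/ωQ' → Q'/f'(P') with h = β ∘ α; in particular h is zero in the stable category of R-modules. -/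
universe u

/-- if `(ψ₁, ψ₀)` is null-homotopic, then the induced map `h` on
cokernels factors through the projective `R`-module `Q'/ωQ'`. -/
theorem stmt_15 {S : Type u} [CommRing S] [IsNoetherianRing S] [IsLocalRing S]
    (ω : S) (hω : ω ∈ IsLocalRing.maximalIdeal S) (hreg : ω ∈ nonZeroDivisors S)
    {P Q P' Q' : Type u} [AddCommGroup P] [Module S P] [AddCommGroup Q] [Module S Q]
    [AddCommGroup P'] [Module S P'] [AddCommGroup Q'] [Module S Q']
    [Module.Finite S P] [Module.Projective S P]
    [Module.Finite S Q] [Module.Projective S Q]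
    [Module.Finite S P'] [Module.Projective S P']
    [Module.Finite S Q'] [Module.Projective S Q']
    (f : P →ₗ[S] Q) (hinj : Function.Injective f)
    (hcok : ∀ q : Q, ω • q ∈ LinearMap.range f)
    (f' : P' →ₗ[S] Q') (hinj' : Function.Injective f')
    (hcok' : ∀ q : Q', ω • q ∈ LinearMap.range f')
    (ψ₁ : P →ₗ[S] P') (ψ₀ : Q →ₗ[S] Q')
    (hcomm : ∀ p : P, ψ₀ (f p) = f' (ψ₁ p))
    (h : (Q ⧸ LinearMap.range f) →ₗ[S] (Q' ⧸ LinearMap.range f'))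
    (hh : ∀ q : Q, h (Submodule.Quotient.mk q) = Submodule.Quotient.mk (ψ₀ q))
    (hnull : ∃ (s₁ : P →ₗ[S] Q') (s₀ : Q →ₗ[S] P'),
      ∀ p : P, ψ₀ (f p) - f' (s₀ (f p)) = ω • s₁ p) :
    ∃ (α : (Q ⧸ LinearMap.range f) →ₗ[S]
        (Q' ⧸ LinearMap.range (ω • (LinearMap.id : Q' →ₗ[S] Q'))))
      (β : (Q' ⧸ LinearMap.range (ω • (LinearMap.id : Q' →ₗ[S] Q'))) →ₗ[S]
        (Q' ⧸ LinearMap.range f')),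
      ∀ x : Q ⧸ LinearMap.range f, h x = β (α x) := by
  obtain ⟨s₁, s₀, hs⟩ := hnull
  set N : Submodule S Q' := LinearMap.range (ω • (LinearMap.id : Q' →ₗ[S] Q'))
  have hmemN : ∀ q : Q', ω • q ∈ N := fun q => ⟨q, rfl⟩
  refine ⟨Submodule.liftQ _ (N.mkQ ∘ₗ (ψ₀ - f' ∘ₗ s₀)) ?_,
    Submodule.liftQ _ (LinearMap.range f').mkQ ?_, ?_⟩
  · rintro x ⟨p, rfl⟩
    simp only [LinearMap.mem_ker, LinearMap.comp_apply, LinearMap.sub_apply]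
    rw [hs p]
    simpa using (Submodule.Quotient.mk_eq_zero N).2 (hmemN (s₁ p))
  · rintro x ⟨q, rfl⟩
    simp only [LinearMap.mem_ker, LinearMap.smul_apply, LinearMap.id_apply]
    exact (Submodule.Quotient.mk_eq_zero _).2 (hcok' q)
  · intro x
    obtain ⟨q, rfl⟩ := Submodule.mkQ_surjective _ x
    have : (Submodule.mkQ (LinearMap.range f)) q = Submodule.Quotient.mk q := rfl
    rw [this, hh q]
    simp only [Submodule.liftQ_apply, LinearMap.comp_apply, LinearMap.sub_apply,
      Submodule.mkQ_apply]
    rw [Submodule.Quotient.eq]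
    refine ⟨s₀ q, ?_⟩
    abel
end
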